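/- (Pair interleaving theorem.) Let q, k, ℓ, n ≥ 1 be integers. If there exists an ℓ-valid (q,k)-colouring of n eBugs, then there exists a (2ℓ)-valid (q, 2k)-colouring of ⌊k/2⌋·n² eBugs. Consequently E(q, 2k, 2ℓ) ≥ ⌊k/2⌋ · E(q,k,ℓ)². -/
import Mathlib

/-- A `(q,k)`-colouring of `n` eBugs is `ℓ`-valid if its `ℓ`-window map is injective. -/
def ebugValid (q k ℓ n : ℕ) (c : Fin n → ZMod k → Fin q) : Prop :=
  Function.Injective (fun p : Fin n × ZMod k => fun s : Fin ℓ => c p.1 (p.2 + (s : ℕ)))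

/-- The eBug number `E(q,k,ℓ)`: the greatest `n` admitting an `ℓ`-valid `(q,k)`-colouring. -/
noncomputable def eBugNumber (q k ℓ : ℕ) : ℕ :=
  sSup {n : ℕ | ∃ c : Fin n → ZMod k → Fin q, ebugValid q k ℓ n c}

/-- Interleaved colouring viewed as a function on naturals. -/
def ebF {q k n : ℕ} (c : Fin n → ZMod k → Fin q)
    (x : Fin (k / 2) × Fin n × Fin n) (r : ℕ) : Fin q :=
  if r % 2 = 0 then c x.2.1 ((r / 2 : ℕ) : ZMod k)
  else c x.2.2 (((r / 2 : ℕ) : ZMod k) + ((x.1 : ℕ) : ZMod k) + 1)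

lemma ebF_mod {q k n : ℕ} [NeZero k] (c : Fin n → ZMod k → Fin q)
    (x : Fin (k / 2) × Fin n × Fin n) (r : ℕ) :
    ebF c x r = ebF c x (r % (2 * k)) := by
  obtain ⟨m, qq, hlt, hr⟩ : ∃ m qq, m < 2 * k ∧ r = m + 2 * k * qq :=
    ⟨r % (2 * k), r / (2 * k), Nat.mod_lt _ (by have := NeZero.pos k; omega),
      (Nat.mod_add_div r (2 * k)).symm⟩
  subst hr
  have hmod : (m + 2 * k * qq) % (2 * k) = m := by
    rw [Nat.add_mul_mod_self_left]
    exact Nat.mod_eq_of_lt hlt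
  have hrw : m + 2 * k * qq = m + 2 * (k * qq) := by ring
  have h2 : (m + 2 * k * qq) % 2 = m % 2 := by
    rw [hrw, Nat.add_mul_mod_self_left]
  have hdiv : (m + 2 * k * qq) / 2 = m / 2 + k * qq := by
    rw [hrw, Nat.add_mul_div_left _ _ (by norm_num : 0 < 2)]
  have hcast : ((m / 2 + k * qq : ℕ) : ZMod k) = ((m / 2 : ℕ) : ZMod k) := by
    push_cast
    simp
  rw [hmod]
  simp only [ebF, h2, hdiv, hcast]

lemma ebF_even {q k n : ℕ} (c : Fin n → ZMod k → Fin q)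
    (x : Fin (k / 2) × Fin n × Fin n) (P u : ℕ) :
    ebF c x (P + 2 * u) =
      if P % 2 = 0 then c x.2.1 (((P / 2 : ℕ) : ZMod k) + (u : ℕ))
      else c x.2.2 (((P / 2 : ℕ) : ZMod k) + ((x.1 : ℕ) : ZMod k) + 1 + (u : ℕ)) := by
  have h1 : (P + 2 * u) % 2 = P % 2 := by omega
  have h2 : (P + 2 * u) / 2 = P / 2 + u := by omega
  simp only [ebF, h1, h2]
  by_cases h : P % 2 = 0
  · simp only [if_pos h]; congr 1; push_cast; ring
  · simp only [if_neg h]; congr 1; push_cast; ring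

lemma ebF_odd {q k n : ℕ} (c : Fin n → ZMod k → Fin q)
    (x : Fin (k / 2) × Fin n × Fin n) (P u : ℕ) :
    ebF c x (P + (2 * u + 1)) =
      if P % 2 = 0 then c x.2.2 (((P / 2 : ℕ) : ZMod k) + ((x.1 : ℕ) : ZMod k) + 1 + (u : ℕ))
      else c x.2.1 (((P / 2 : ℕ) : ZMod k) + 1 + (u : ℕ)) := by
  by_cases h : P % 2 = 0
  · have h1 : (P + (2 * u + 1)) % 2 = 1 := by omega
    have h2 : (P + (2 * u + 1)) / 2 = P / 2 + u := by omega
    simp only [ebF, h1, h2, if_pos h, if_neg (by norm_num : ¬(1 = 0))]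
    congr 1; push_cast; ring
  · have h1 : (P + (2 * u + 1)) % 2 = 0 := by omega
    have h2 : (P + (2 * u + 1)) / 2 = P / 2 + u + 1 := by omega
    simp only [ebF, h1, h2, if_pos rfl, if_neg h]
    congr 1; push_cast; ring

lemma ebug_bdd (q k ℓ : ℕ) (hk : 1 ≤ k) :
    BddAbove {n : ℕ | ∃ c : Fin n → ZMod k → Fin q, ebugValid q k ℓ n c} := by
  refine ⟨q ^ ℓ, fun n hn => ?_⟩
  obtain ⟨c, hc⟩ := hn
  haveI : NeZero k := ⟨by omega⟩
  have hcard := Fintype.card_le_of_injective _ hc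
  simp only [Fintype.card_prod, Fintype.card_fin, ZMod.card, Fintype.card_fun] at hcard
  calc n ≤ n * k := Nat.le_mul_of_pos_right _ (by omega)
    _ ≤ q ^ ℓ := hcard

lemma ebug_double (q k ℓ n : ℕ) (hk : 1 ≤ k)
    (h : ∃ c : Fin n → ZMod k → Fin q, ebugValid q k ℓ n c) :
    ∃ d : Fin (k / 2 * n ^ 2) → ZMod (2 * k) → Fin q,
      ebugValid q (2 * k) (2 * ℓ) (k / 2 * n ^ 2) d := by
  obtain ⟨c, hc⟩ := h
  haveI : NeZero k := ⟨by omega⟩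
  haveI : NeZero (2 * k) := ⟨by omega⟩
  let e : Fin (k / 2 * n ^ 2) ≃ Fin (k / 2) × Fin n × Fin n :=
    (finCongr (by ring : k / 2 * n ^ 2 = k / 2 * (n * n))).trans <|
      finProdFinEquiv.symm.trans <| (Equiv.refl (Fin (k / 2))).prodCongr finProdFinEquiv.symm
  refine ⟨fun i m => ebF c (e i) m.val, ?_⟩
  have hval : ∀ (x : Fin (k / 2) × Fin n × Fin n) (m : ZMod (2 * k)) (s : ℕ),
      ebF c x ((m + (s : ZMod (2 * k))).val) = ebF c x (m.val + s) := by
    intro x m s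
    have h1 : (m + (s : ZMod (2 * k))).val = (m.val + s) % (2 * k) := by
      rw [ZMod.val_add, ZMod.val_natCast, Nat.add_mod_mod]
    rw [h1, ← ebF_mod]
  rintro ⟨i, p⟩ ⟨i', p'⟩ hpp
  rcases hX : e i with ⟨t, a, b⟩
  rcases hX' : e i' with ⟨t', a', b'⟩
  have hw : ∀ s : Fin (2 * ℓ),
      ebF c (t, a, b) (p.val + (s : ℕ)) = ebF c (t', a', b') (p'.val + (s : ℕ)) := by
    intro s
    have h0 := congrFun hpp s
    simp only [hX, hX'] at h0 ⊢
    simpa only [hval] using h0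
  set P := p.val with hPdef
  set P' := p'.val with hP'def
  have hPlt : P < 2 * k := ZMod.val_lt p
  have hP'lt : P' < 2 * k := ZMod.val_lt p'
  have htlt : (t : ℕ) < k / 2 := t.isLt
  have ht'lt : (t' : ℕ) < k / 2 := t'.isLt
  -- even-position windows
  have hEv : ∀ u : Fin ℓ,
      (if P % 2 = 0 then c a (((P / 2 : ℕ) : ZMod k) + (u : ℕ))
        else c b (((P / 2 : ℕ) : ZMod k) + ((t : ℕ) : ZMod k) + 1 + (u : ℕ)))
      = (if P' % 2 = 0 then c a' (((P' / 2 : ℕ) : ZMod k) + (u : ℕ))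
        else c b' (((P' / 2 : ℕ) : ZMod k) + ((t' : ℕ) : ZMod k) + 1 + (u : ℕ))) := by
    intro u
    have h0 := hw ⟨2 * (u : ℕ), by have := u.isLt; omega⟩
    simpa only [ebF_even] using h0
  have hOd : ∀ u : Fin ℓ,
      (if P % 2 = 0 then c b (((P / 2 : ℕ) : ZMod k) + ((t : ℕ) : ZMod k) + 1 + (u : ℕ))
        else c a (((P / 2 : ℕ) : ZMod k) + 1 + (u : ℕ)))
      = (if P' % 2 = 0 then c b' (((P' / 2 : ℕ) : ZMod k) + ((t' : ℕ) : ZMod k) + 1 + (u : ℕ))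
        else c a' (((P' / 2 : ℕ) : ZMod k) + 1 + (u : ℕ))) := by
    intro u
    have h0 := hw ⟨2 * (u : ℕ) + 1, by have := u.isLt; omega⟩
    simpa only [ebF_odd] using h0
  -- a helper to conclude
  have finish : t = t' → a = a' → b = b' → P = P' → ((i, p) : _ × _) = (i', p') := by
    intro h1 h2 h3 h4
    have hii : i = i' := e.injective (by rw [hX, hX', h1, h2, h3])
    have hpp2 : p = p' := ZMod.val_injective _ h4
    rw [hii, hpp2]
  have valcast : ∀ m m' : ℕ, m < k → m' < k → ((m : ZMod k) = (m' : ZMod k)) → m = m' := by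
    intro m m' hm hm' hmm
    have := congrArg ZMod.val hmm
    rwa [ZMod.val_natCast, ZMod.val_natCast, Nat.mod_eq_of_lt hm, Nat.mod_eq_of_lt hm'] at this
  by_cases hP : P % 2 = 0 <;> by_cases hP' : P' % 2 = 0
  · -- both even
    have hA : ((a, ((P / 2 : ℕ) : ZMod k)) : Fin n × ZMod k) = (a', ((P' / 2 : ℕ) : ZMod k)) := by
      apply hc; funext u
      simpa only [if_pos hP, if_pos hP'] using hEv u
    have hB : ((b, ((P / 2 : ℕ) : ZMod k) + ((t : ℕ) : ZMod k) + 1) : Fin n × ZMod k)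
        = (b', ((P' / 2 : ℕ) : ZMod k) + ((t' : ℕ) : ZMod k) + 1) := by
      apply hc; funext u
      simpa only [if_pos hP, if_pos hP'] using hOd u
    simp only [Prod.mk.injEq] at hA hB
    obtain ⟨ha, hQ⟩ := hA
    obtain ⟨hb, hT⟩ := hB
    have htt : ((t : ℕ) : ZMod k) = ((t' : ℕ) : ZMod k) := by linear_combination hT - hQ
    have ht : t = t' := Fin.val_injective (valcast _ _ (by omega) (by omega) htt)
    have hPP : P = P' := by
      have := valcast (P / 2) (P' / 2) (by omega) (by omega) hQ
      omega
    exact finish ht ha hb hPP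
  · -- P even, P' odd : contradiction
    exfalso
    have hA : ((a, ((P / 2 : ℕ) : ZMod k)) : Fin n × ZMod k)
        = (b', ((P' / 2 : ℕ) : ZMod k) + ((t' : ℕ) : ZMod k) + 1) := by
      apply hc; funext u
      simpa only [if_pos hP, if_neg hP'] using hEv u
    have hB : ((b, ((P / 2 : ℕ) : ZMod k) + ((t : ℕ) : ZMod k) + 1) : Fin n × ZMod k)
        = (a', ((P' / 2 : ℕ) : ZMod k) + 1) := by
      apply hc; funext u
      simpa only [if_pos hP, if_neg hP'] using hOd u
    simp only [Prod.mk.injEq] at hA hB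
    have h0 : (((t : ℕ) + (t' : ℕ) + 1 : ℕ) : ZMod k) = 0 := by
      push_cast
      linear_combination hB.2 - hA.2
    rw [ZMod.natCast_eq_zero_iff] at h0
    have := Nat.le_of_dvd (by omega) h0
    omega
  · -- P odd, P' even : contradiction
    exfalso
    have hA : ((b, ((P / 2 : ℕ) : ZMod k) + ((t : ℕ) : ZMod k) + 1) : Fin n × ZMod k)
        = (a', ((P' / 2 : ℕ) : ZMod k)) := by
      apply hc; funext u
      simpa only [if_neg hP, if_pos hP'] using hEv u
    have hB : ((a, ((P / 2 : ℕ) : ZMod k) + 1) : Fin n × ZMod k)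
        = (b', ((P' / 2 : ℕ) : ZMod k) + ((t' : ℕ) : ZMod k) + 1) := by
      apply hc; funext u
      simpa only [if_neg hP, if_pos hP'] using hOd u
    simp only [Prod.mk.injEq] at hA hB
    have h0 : (((t : ℕ) + (t' : ℕ) + 1 : ℕ) : ZMod k) = 0 := by
      push_cast
      linear_combination hA.2 - hB.2
    rw [ZMod.natCast_eq_zero_iff] at h0
    have := Nat.le_of_dvd (by omega) h0
    omega
  · -- both odd
    have hA : ((b, ((P / 2 : ℕ) : ZMod k) + ((t : ℕ) : ZMod k) + 1) : Fin n × ZMod k)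
        = (b', ((P' / 2 : ℕ) : ZMod k) + ((t' : ℕ) : ZMod k) + 1) := by
      apply hc; funext u
      simpa only [if_neg hP, if_neg hP'] using hEv u
    have hB : ((a, ((P / 2 : ℕ) : ZMod k) + 1) : Fin n × ZMod k)
        = (a', ((P' / 2 : ℕ) : ZMod k) + 1) := by
      apply hc; funext u
      simpa only [if_neg hP, if_neg hP'] using hOd u
    simp only [Prod.mk.injEq] at hA hB
    obtain ⟨hb, hT⟩ := hA
    obtain ⟨ha, hQ'⟩ := hB
    have hQ : ((P / 2 : ℕ) : ZMod k) = ((P' / 2 : ℕ) : ZMod k) := by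
      linear_combination hQ'
    have htt : ((t : ℕ) : ZMod k) = ((t' : ℕ) : ZMod k) := by linear_combination hT - hQ
    have ht : t = t' := Fin.val_injective (valcast _ _ (by omega) (by omega) htt)
    have hPP : P = P' := by
      have := valcast (P / 2) (P' / 2) (by omega) (by omega) hQ
      omega
    exact finish ht ha hb hPP

theorem stmt13 (q k ℓ n : ℕ) (hq : 1 ≤ q) (hk : 1 ≤ k) (hℓ : 1 ≤ ℓ) (hn : 1 ≤ n)
    (h : ∃ c : Fin n → ZMod k → Fin q, ebugValid q k ℓ n c) :
    (∃ c : Fin (k / 2 * n ^ 2) → ZMod (2 * k) → Fin q,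
      ebugValid q (2 * k) (2 * ℓ) (k / 2 * n ^ 2) c) ∧
    k / 2 * eBugNumber q k ℓ ^ 2 ≤ eBugNumber q (2 * k) (2 * ℓ) := by
  refine ⟨ebug_double q k ℓ n hk h, ?_⟩
  have hbd := ebug_bdd q k ℓ hk
  have hne : {m : ℕ | ∃ c : Fin m → ZMod k → Fin q, ebugValid q k ℓ m c}.Nonempty := ⟨n, h⟩
  have hmem : eBugNumber q k ℓ ∈ {m : ℕ | ∃ c : Fin m → ZMod k → Fin q, ebugValid q k ℓ m c} :=
    Nat.sSup_mem hne hbd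
  have hdouble := ebug_double q k ℓ (eBugNumber q k ℓ) hk hmem
  exact le_csSup (ebug_bdd q (2 * k) (2 * ℓ) (by omega)) hdouble
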